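/- arXiv:2512.06968 — 5 statements merged into one kernel-verified Lean document; each statement's English description precedes it below -/
import Mathlib

section
/- The strong limit R_∞ of the alternating residual flow is a simultaneous fixed point of both residual maps: R_∞ = Φ_{P_A}(R_∞) = Φ_{P_B}(R_∞), and its range is contained in K = ker P_A ∩ ker P_B. -/
open Filter Topology

section AuxCS

local notation "⟪" x ", " y "⟫" => @inner ℂ _ _ x y

variable {H : Type*} [NormedAddCommGroup H] [InnerProductSpace ℂ H] [CompleteSpace H]

lemma sa_inner_aux {T : H →L[ℂ] H} (hT : IsSelfAdjoint T) (x y : H) :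
    ⟪T x, y⟫ = ⟪x, T y⟫ :=
  (ContinuousLinearMap.isSelfAdjoint_iff_isSymmetric.mp hT) x y

lemma re_inner_symm_of_sa {T : H →L[ℂ] H} (hT : IsSelfAdjoint T) (x y : H) :
    Complex.re ⟪T x, y⟫ = Complex.re ⟪T y, x⟫ := by
  rw [sa_inner_aux hT y x, ← inner_conj_symm (T x) y, Complex.conj_re]

lemma pos_cauchy_schwarz {T : H →L[ℂ] H} (hT : T.IsPositive) (a b : H) :
    (Complex.re ⟪T a, b⟫)^2 ≤ Complex.re ⟪T a, a⟫ * Complex.re ⟪T b, b⟫ := by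
  set A := Complex.re ⟪T a, a⟫ with hA
  set C := Complex.re ⟪T a, b⟫ with hC
  set D := Complex.re ⟪T b, b⟫ with hD
  have hq : ∀ t : ℝ, 0 ≤ D * (t * t) + (-(2 * C)) * t + A := by
    intro t
    have h0 : 0 ≤ Complex.re ⟪T (a - (t : ℂ) • b), a - (t : ℂ) • b⟫ :=
      hT.re_inner_nonneg_left _
    have hexp : ⟪T (a - (t : ℂ) • b), a - (t : ℂ) • b⟫
        = ⟪T a, a⟫ - (t : ℂ) * ⟪T a, b⟫ - (t : ℂ) * ⟪T b, a⟫ + (t : ℂ) ^ 2 * ⟪T b, b⟫ := by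
      rw [map_sub, map_smul, inner_sub_left, inner_sub_right, inner_sub_right,
        inner_smul_left, inner_smul_right, inner_smul_left, inner_smul_right,
        Complex.conj_ofReal]
      ring
    rw [hexp, ← Complex.ofReal_pow] at h0
    simp only [Complex.add_re, Complex.sub_re, Complex.mul_re, Complex.ofReal_re,
      Complex.ofReal_im, zero_mul, sub_zero] at h0
    have hsymm : Complex.re ⟪T b, a⟫ = C := re_inner_symm_of_sa hT.isSelfAdjoint b a
    rw [hsymm] at h0
    nlinarith [h0]
  have hdisc := discrim_le_zero hq
  simp only [discrim] at hdisc
  nlinarith [hdisc]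

/-- Core analytic lemma: if along a subsequence the flow applies the residual map of the
projection `P`, then `Qinf` kills every fixed vector of `P`. -/
lemma key_vanish (P : H →L[ℂ] H) (hPsa : IsSelfAdjoint P) (hPidem : IsIdempotentElem P)
    (R Q : ℕ → (H →L[ℂ] H))
    (hQpos : ∀ n, (Q n).IsPositive) (hQsq : ∀ n, Q n * Q n = R n)
    (Rinf Qinf : H →L[ℂ] H)
    (hQinfpos : Qinf.IsPositive) (hQinfsq : Qinf * Qinf = Rinf)
    (hconv : ∀ x : H, Tendsto (fun n => R n x) atTop (𝓝 (Rinf x)))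
    (φ : ℕ → ℕ) (hφ : StrictMono φ)
    (hstep : ∀ n, R (φ n + 1) = Q (φ n) * (1 - P) * Q (φ n))
    (u : H) (hu : P u = u) : Qinf u = 0 := by
  set L := Complex.re ⟪Rinf u, u⟫ with hL
  have hfL : Tendsto (fun n => Complex.re ⟪R n u, u⟫) atTop (𝓝 L) :=
    (Complex.continuous_re.tendsto _).comp ((hconv u).inner tendsto_const_nhds)
  have hsub1 : Tendsto (fun n => Complex.re ⟪R (φ n) u, u⟫) atTop (𝓝 L) :=
    hfL.comp hφ.tendsto_atTop
  have hψ : StrictMono (fun n => φ n + 1) := fun a b h => by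
    simpa using Nat.add_lt_add_right (hφ h) 1
  have hsub2 : Tendsto (fun n => Complex.re ⟪R (φ n + 1) u, u⟫) atTop (𝓝 L) :=
    hfL.comp hψ.tendsto_atTop
  -- the basic quadratic-form identities
  have hform : ∀ n, ⟪R n u, u⟫ = ⟪Q n u, Q n u⟫ := by
    intro n
    rw [← hQsq n, ContinuousLinearMap.mul_apply, sa_inner_aux (hQpos n).isSelfAdjoint]
  have hPform : ∀ v : H, ⟪P v, v⟫ = ⟪P v, P v⟫ := by
    intro v
    have hi : P (P v) = P v := by rw [← ContinuousLinearMap.mul_apply, hPidem]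
    calc ⟪P v, v⟫ = ⟪P (P v), v⟫ := by rw [hi]
      _ = ⟪P v, P v⟫ := sa_inner_aux hPsa (P v) v
  have hdiff : ∀ n, Complex.re ⟪R (φ n) u, u⟫ - Complex.re ⟪R (φ n + 1) u, u⟫
      = ‖P (Q (φ n) u)‖ ^ 2 := by
    intro n
    have h1 : (R (φ n + 1)) u = Q (φ n) (Q (φ n) u - P (Q (φ n) u)) := by
      rw [hstep n]
      simp [ContinuousLinearMap.mul_apply, ContinuousLinearMap.sub_apply]
    have h2 : ⟪R (φ n + 1) u, u⟫
        = ⟪Q (φ n) u, Q (φ n) u⟫ - ⟪P (Q (φ n) u), Q (φ n) u⟫ := by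
      rw [h1, sa_inner_aux (hQpos (φ n)).isSelfAdjoint, inner_sub_left]
    rw [h2, hform (φ n)]
    have h3 : Complex.re ⟪P (Q (φ n) u), Q (φ n) u⟫ = ‖P (Q (φ n) u)‖ ^ 2 := by
      rw [hPform, ← inner_self_eq_norm_sq (𝕜 := ℂ), RCLike.re_to_complex]
    simp only [Complex.sub_re]
    rw [← h3]; ring
  -- ‖P (Q (φ n) u)‖ → 0
  have hP2 : Tendsto (fun n => ‖P (Q (φ n) u)‖ ^ 2) atTop (𝓝 0) := by
    have h := hsub1.sub hsub2
    rw [sub_self] at h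
    simpa only [hdiff] using h
  have hP0 : Tendsto (fun n => ‖P (Q (φ n) u)‖) atTop (𝓝 0) := by
    have := hP2.sqrt
    simpa [Real.sqrt_sq (norm_nonneg _)] using this
  -- re ⟪Q (φ n) u, u⟫ → 0
  have hQuu : ∀ n, ⟪Q (φ n) u, u⟫ = ⟪P (Q (φ n) u), u⟫ := by
    intro n
    rw [sa_inner_aux hPsa (Q (φ n) u) u, hu]
  have hQuu0 : Tendsto (fun n => Complex.re ⟪Q (φ n) u, u⟫) atTop (𝓝 0) := by
    have hb : ∀ n, ‖Complex.re ⟪Q (φ n) u, u⟫‖ ≤ ‖P (Q (φ n) u)‖ * ‖u‖ := by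
      intro n
      calc ‖Complex.re ⟪Q (φ n) u, u⟫‖ ≤ ‖⟪Q (φ n) u, u⟫‖ := by
            rw [Real.norm_eq_abs]; exact Complex.abs_re_le_norm _
        _ = ‖⟪P (Q (φ n) u), u⟫‖ := by rw [hQuu n]
        _ ≤ ‖P (Q (φ n) u)‖ * ‖u‖ := norm_inner_le_norm _ _
    exact squeeze_zero_norm hb (by simpa using hP0.mul_const ‖u‖)
  -- boundedness of ‖R (φ n) u‖ and of ‖Q (φ n) u‖
  have hRconv : Tendsto (fun n => ‖R (φ n) u‖) atTop (𝓝 ‖Rinf u‖) :=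
    ((hconv u).comp hφ.tendsto_atTop).norm
  obtain ⟨M, hM⟩ := hRconv.bddAbove_range
  have hMb : ∀ n, ‖R (φ n) u‖ ≤ M := fun n => hM ⟨n, rfl⟩
  have hg : Tendsto (fun n => ‖Q (φ n) u‖ ^ 2) atTop (𝓝 L) := by
    have : ∀ n, Complex.re ⟪R (φ n) u, u⟫ = ‖Q (φ n) u‖ ^ 2 := by
      intro n; rw [hform (φ n), ← inner_self_eq_norm_sq (𝕜 := ℂ), RCLike.re_to_complex]
    simpa only [this] using hsub1
  obtain ⟨M2, hM2⟩ := hg.bddAbove_range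
  have hM2b : ∀ n, ‖Q (φ n) u‖ ^ 2 ≤ M2 := fun n => hM2 ⟨n, rfl⟩
  have hQb : ∀ n, ‖Q (φ n) u‖ ≤ 1 + M2 := by
    intro n
    nlinarith [hM2b n, norm_nonneg (Q (φ n) u)]
  -- squeeze for (‖Q (φ n) u‖²)² → 0
  have hsq0 : Tendsto (fun n => (‖Q (φ n) u‖ ^ 2) ^ 2) atTop (𝓝 0) := by
    have hb : ∀ n, ‖(‖Q (φ n) u‖ ^ 2) ^ 2‖ ≤ Complex.re ⟪Q (φ n) u, u⟫ * (M * (1 + M2)) := by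
      intro n
      have hcs := pos_cauchy_schwarz (hQpos (φ n)) u (Q (φ n) u)
      have he1 : Complex.re ⟪Q (φ n) u, Q (φ n) u⟫ = ‖Q (φ n) u‖ ^ 2 := by
        rw [← inner_self_eq_norm_sq (𝕜 := ℂ), RCLike.re_to_complex]
      have he2 : ⟪Q (φ n) (Q (φ n) u), Q (φ n) u⟫ = ⟪R (φ n) u, Q (φ n) u⟫ := by
        rw [← hQsq (φ n)]; rfl
      have hb2 : Complex.re ⟪Q (φ n) (Q (φ n) u), Q (φ n) u⟫ ≤ M * (1 + M2) := by
        rw [he2]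
        calc Complex.re ⟪R (φ n) u, Q (φ n) u⟫ ≤ ‖⟪R (φ n) u, Q (φ n) u⟫‖ := by
              exact Complex.re_le_norm _
          _ ≤ ‖R (φ n) u‖ * ‖Q (φ n) u‖ := norm_inner_le_norm _ _
          _ ≤ M * (1 + M2) := by
              have h1 := hMb n
              have h2 := hQb n
              have h3 : (0:ℝ) ≤ ‖Q (φ n) u‖ := norm_nonneg _
              exact mul_le_mul h1 h2 h3 ((norm_nonneg _).trans h1)
      have hnn : 0 ≤ Complex.re ⟪Q (φ n) u, u⟫ := (hQpos (φ n)).re_inner_nonneg_left u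
      have hnn2 : 0 ≤ Complex.re ⟪Q (φ n) (Q (φ n) u), Q (φ n) u⟫ :=
        (hQpos (φ n)).re_inner_nonneg_left _
      rw [Real.norm_eq_abs, abs_of_nonneg (by positivity)]
      calc (‖Q (φ n) u‖ ^ 2) ^ 2 = (Complex.re ⟪Q (φ n) u, Q (φ n) u⟫) ^ 2 := by rw [he1]
        _ ≤ Complex.re ⟪Q (φ n) u, u⟫ * Complex.re ⟪Q (φ n) (Q (φ n) u), Q (φ n) u⟫ := hcs
        _ ≤ Complex.re ⟪Q (φ n) u, u⟫ * (M * (1 + M2)) := by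
            exact mul_le_mul_of_nonneg_left hb2 hnn
    exact squeeze_zero_norm hb (by simpa using hQuu0.mul_const (M * (1 + M2)))
  -- conclude L = 0
  have hgsq : Tendsto (fun n => (‖Q (φ n) u‖ ^ 2) ^ 2) atTop (𝓝 (L ^ 2)) := hg.pow 2
  have hL2 : L ^ 2 = 0 := tendsto_nhds_unique hgsq hsq0
  have hL0 : L = 0 := pow_eq_zero_iff (by norm_num) |>.mp hL2
  -- Qinf u = 0
  have hQi : Complex.re ⟪Qinf u, Qinf u⟫ = L := by
    rw [← sa_inner_aux hQinfpos.isSelfAdjoint, ← ContinuousLinearMap.mul_apply, hQinfsq]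
  have hn : ‖Qinf u‖ ^ 2 = 0 := by
    rw [← inner_self_eq_norm_sq (𝕜 := ℂ), RCLike.re_to_complex, hQi, hL0]
  exact norm_eq_zero.mp (pow_eq_zero_iff (by norm_num) |>.mp hn)

end AuxCS

/-- The strong limit `R_∞` of the alternating residual flow is a simultaneous
fixed point of both residual maps, `R_∞ = Φ_{P_A}(R_∞) = Φ_{P_B}(R_∞)`, and its range is
contained in `K = ker P_A ∩ ker P_B`.  Here `Qinf` denotes the positive square root of `R_∞`. -/
theorem alternating_residual_flow_limit_fixed_point
    {H : Type*} [NormedAddCommGroup H] [InnerProductSpace ℂ H] [CompleteSpace H]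
    (PA PB : H →L[ℂ] H)
    (hPAsa : IsSelfAdjoint PA) (hPAidem : IsIdempotentElem PA)
    (hPBsa : IsSelfAdjoint PB) (hPBidem : IsIdempotentElem PB)
    (R Q : ℕ → (H →L[ℂ] H))
    (hR0 : (R 0).IsPositive)
    (hQpos : ∀ n, (Q n).IsPositive) (hQsq : ∀ n, Q n * Q n = R n)
    (hflow : ∀ n, R (n + 1) = Q n * (1 - (if Even n then PB else PA)) * Q n)
    (Rinf Qinf : H →L[ℂ] H) (hRinfpos : Rinf.IsPositive)
    (hQinfpos : Qinf.IsPositive) (hQinfsq : Qinf * Qinf = Rinf)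
    (hconv : ∀ x : H, Tendsto (fun n => R n x) atTop (𝓝 (Rinf x))) :
    Rinf = Qinf * (1 - PA) * Qinf ∧ Rinf = Qinf * (1 - PB) * Qinf ∧
      LinearMap.range (Rinf : H →ₗ[ℂ] H) ≤ LinearMap.ker (PA : H →ₗ[ℂ] H) ⊓ LinearMap.ker (PB : H →ₗ[ℂ] H) := by
  have hφA : StrictMono (fun k : ℕ => 2 * k + 1) := fun a b h => by
    show 2 * a + 1 < 2 * b + 1; omega
  have hφB : StrictMono (fun k : ℕ => 2 * k) := fun a b h => by
    show 2 * a < 2 * b; omega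
  have hstepA : ∀ n : ℕ, R ((2 * n + 1) + 1) = Q (2 * n + 1) * (1 - PA) * Q (2 * n + 1) := by
    intro n
    have he : ¬ Even (2 * n + 1) := by simp [parity_simps]
    simpa [he] using hflow (2 * n + 1)
  have hstepB : ∀ n : ℕ, R (2 * n + 1) = Q (2 * n) * (1 - PB) * Q (2 * n) := by
    intro n
    have he : Even (2 * n) := even_two_mul n
    simpa [he] using hflow (2 * n)
  have hvanA : ∀ u, PA u = u → Qinf u = 0 := fun u hu =>
    key_vanish PA hPAsa hPAidem R Q hQpos hQsq Rinf Qinf hQinfpos hQinfsq hconv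
      (fun k => 2 * k + 1) hφA hstepA u hu
  have hvanB : ∀ u, PB u = u → Qinf u = 0 := fun u hu =>
    key_vanish PB hPBsa hPBidem R Q hQpos hQsq Rinf Qinf hQinfpos hQinfsq hconv
      (fun k => 2 * k) hφB hstepB u hu
  have hQPA : Qinf * PA = 0 := by
    ext x
    have hx : PA (PA x) = PA x := by rw [← ContinuousLinearMap.mul_apply, hPAidem]
    simpa [ContinuousLinearMap.mul_apply] using hvanA (PA x) hx
  have hQPB : Qinf * PB = 0 := by
    ext x
    have hx : PB (PB x) = PB x := by rw [← ContinuousLinearMap.mul_apply, hPBidem]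
    simpa [ContinuousLinearMap.mul_apply] using hvanB (PB x) hx
  have hPAQ : PA * Qinf = 0 := by
    calc PA * Qinf = star PA * star Qinf := by
          rw [hPAsa.star_eq, hQinfpos.isSelfAdjoint.star_eq]
      _ = star (Qinf * PA) := (star_mul _ _).symm
      _ = 0 := by rw [hQPA, star_zero]
  have hPBQ : PB * Qinf = 0 := by
    calc PB * Qinf = star PB * star Qinf := by
          rw [hPBsa.star_eq, hQinfpos.isSelfAdjoint.star_eq]
      _ = star (Qinf * PB) := (star_mul _ _).symm
      _ = 0 := by rw [hQPB, star_zero]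
  refine ⟨?_, ?_, ?_⟩
  · rw [mul_sub, mul_one, hQPA, sub_zero, hQinfsq]
  · rw [mul_sub, mul_one, hQPB, sub_zero, hQinfsq]
  · rintro y ⟨x, rfl⟩
    have hy : Rinf x = Qinf (Qinf x) := by
      rw [← hQinfsq]; rfl
    refine Submodule.mem_inf.mpr ⟨LinearMap.mem_ker.mpr ?_, LinearMap.mem_ker.mpr ?_⟩
    · show PA (Rinf x) = 0
      rw [hy, ← ContinuousLinearMap.mul_apply, hPAQ, ContinuousLinearMap.zero_apply]
    · show PB (Rinf x) = 0
      rw [hy, ← ContinuousLinearMap.mul_apply, hPBQ, ContinuousLinearMap.zero_apply]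
end

section
/- Let T ∈ B(H) be positive with range contained in K = ker P_A ∩ ker P_B. Then T^{1/2} also has range in K, Φ_{P_A}(T) = Φ_{P_B}(T) = T, and T is a fixed point of the alternating residual flow. Consequently the set of attainable limits {R_∞(R) : R ∈ B(H)_+} equals the set of positive operators supported on K. -/
open Filter Topology

set_option maxHeartbeats 1000000
set_option synthInstance.maxHeartbeats 400000

section Aux

open ContinuousLinearMap RCLike
open scoped InnerProductSpace

variable {H : Type*} [NormedAddCommGroup H] [InnerProductSpace ℂ H] [CompleteSpace H]

private lemma aux_symm {A : H →L[ℂ] H} (hA : IsSelfAdjoint A) (x y : H) :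
    ⟪A x, y⟫_ℂ = ⟪x, A y⟫_ℂ :=
  (isSelfAdjoint_iff_isSymmetric.mp hA) x y

private lemma aux_idem_apply {P : H →L[ℂ] H} (hidem : IsIdempotentElem P) (y : H) :
    P (P y) = P y := by
  conv_rhs => rw [← hidem]
  rfl

private lemma aux_proj_re {P : H →L[ℂ] H} (hsa : IsSelfAdjoint P) (hidem : IsIdempotentElem P)
    (y : H) : re ⟪P y, y⟫_ℂ = ‖P y‖ ^ 2 := by
  rw [← aux_idem_apply hidem y, aux_symm hsa (P y) y, aux_idem_apply hidem y]
  exact inner_self_eq_norm_sq _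

private lemma aux_proj_pos {P : H →L[ℂ] H} (hsa : IsSelfAdjoint P) (hidem : IsIdempotentElem P) :
    P.IsPositive := by
  refine isPositive_def'.mpr ⟨hsa, fun x => ?_⟩
  rw [reApplyInnerSelf_apply, aux_proj_re hsa hidem x]
  positivity

private lemma aux_pos_conj {T S : H →L[ℂ] H} (hT : T.IsPositive) (hS : IsSelfAdjoint S) :
    (S * T * S).IsPositive := by
  have h := hT.adjoint_conj S
  rw [hS.adjoint_eq] at h
  rw [mul_assoc]
  exact h

private lemma aux_kill {P Q S : H →L[ℂ] H} (hPsa : IsSelfAdjoint P) (hQ : Q.IsPositive)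
    (hsq : Q * Q = S) (hS : ∀ x, P (S x) = 0) : ∀ x, P (Q x) = 0 := by
  have hQsa : IsSelfAdjoint Q := hQ.isSelfAdjoint
  have hSsa : IsSelfAdjoint S := by
    rw [← hsq, IsSelfAdjoint]
    rw [star_mul, hQsa.star_eq]
  have hSP : ∀ x, S (P x) = 0 := by
    intro x
    refine ext_inner_right ℂ fun y => ?_
    rw [aux_symm hSsa, aux_symm hPsa, hS y, inner_zero_left, inner_zero_right]
  have hQP : ∀ x, Q (P x) = 0 := by
    intro x
    have hQQ : Q (Q (P x)) = S (P x) := by rw [← hsq]; rfl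
    have hn : ⟪Q (P x), Q (P x)⟫_ℂ = 0 := by
      rw [aux_symm hQsa (P x) (Q (P x)), hQQ, hSP x, inner_zero_right]
    rwa [inner_self_eq_zero] at hn
  intro x
  refine ext_inner_right ℂ fun y => ?_
  rw [aux_symm hPsa, aux_symm hQsa, hQP y, inner_zero_left, inner_zero_right]


private lemma aux_limit_kill {P : H →L[ℂ] H} {Qs : ℕ → (H →L[ℂ] H)} {c : ℝ}
    (hQc : ∀ k, ‖Qs k‖ ≤ c) {x v z : H}
    (hv : Tendsto (fun k => Qs k x) atTop (𝓝 v))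
    (hz : Tendsto (fun k => Qs k (Qs k x)) atTop (𝓝 z))
    (hkill : ∀ y : H, Tendsto (fun k => P (Qs k y)) atTop (𝓝 0)) : P z = 0 := by
  have h1 : Tendsto (fun k => P (Qs k (Qs k x))) atTop (𝓝 (P z)) :=
    (P.continuous.tendsto z).comp hz
  have h2 : Tendsto (fun k => P (Qs k (Qs k x))) atTop (𝓝 0) := by
    rw [tendsto_zero_iff_norm_tendsto_zero]
    have hbound : ∀ k, ‖P (Qs k (Qs k x))‖ ≤ ‖P‖ * c * ‖Qs k x - v‖ + ‖P (Qs k v)‖ := by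
      intro k
      have : P (Qs k (Qs k x)) = P (Qs k (Qs k x - v)) + P (Qs k v) := by
        rw [← map_add, ← map_add, sub_add_cancel]
      rw [this]
      refine (norm_add_le _ _).trans (add_le_add_left ?_ _)
      calc ‖P (Qs k (Qs k x - v))‖ ≤ ‖P‖ * ‖Qs k (Qs k x - v)‖ := P.le_opNorm _
        _ ≤ ‖P‖ * (‖Qs k‖ * ‖Qs k x - v‖) := by
            exact mul_le_mul_of_nonneg_left ((Qs k).le_opNorm _) (norm_nonneg _)
        _ ≤ ‖P‖ * c * ‖Qs k x - v‖ := by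
            rw [mul_assoc]
            refine mul_le_mul_of_nonneg_left ?_ (norm_nonneg _)
            exact mul_le_mul_of_nonneg_right (hQc k) (norm_nonneg _)
    have hg : Tendsto (fun k => ‖P‖ * c * ‖Qs k x - v‖ + ‖P (Qs k v)‖) atTop (𝓝 0) := by
      have ha : Tendsto (fun k => ‖Qs k x - v‖) atTop (𝓝 0) := by
        rw [← tendsto_zero_iff_norm_tendsto_zero]
        simpa using hv.sub (tendsto_const_nhds (x := v))
      have hb : Tendsto (fun k => ‖P (Qs k v)‖) atTop (𝓝 0) :=
        tendsto_zero_iff_norm_tendsto_zero.mp (hkill v)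
      simpa using (ha.const_mul (‖P‖ * c)).add hb
    exact squeeze_zero (fun k => norm_nonneg _) hbound hg
  exact tendsto_nhds_unique h1 h2

private lemma aux_weierstrass {C ε : ℝ} (hε : 0 < ε) :
    ∃ p : Polynomial ℝ, ∀ t ∈ Set.Icc (0 : ℝ) C, |Real.sqrt t - p.eval t| ≤ ε := by
  have h := polynomialFunctions_closure_eq_top 0 C
  set sc : C(Set.Icc (0 : ℝ) C, ℝ) := ⟨fun t => Real.sqrt t, by fun_prop⟩ with hsc
  have hmem : sc ∈ closure ((polynomialFunctions (Set.Icc (0 : ℝ) C)) : Set C(Set.Icc (0:ℝ) C, ℝ)) := by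
    have : sc ∈ (polynomialFunctions (Set.Icc (0 : ℝ) C)).topologicalClosure := by
      rw [h]; trivial
    exact this
  rw [Metric.mem_closure_iff] at hmem
  obtain ⟨g, hg, hdist⟩ := hmem ε hε
  rw [polynomialFunctions_coe] at hg
  obtain ⟨p, rfl⟩ := hg
  refine ⟨p, fun t ht => ?_⟩
  have := ContinuousMap.dist_apply_le_dist (f := sc) (g := Polynomial.toContinuousMapOnAlgHom _ p) ⟨t, ht⟩
  have h2 := this.trans hdist.le
  simpa [hsc, Real.dist_eq, Polynomial.toContinuousMapOnAlgHom] using h2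

private lemma aux_sqrt_eq {Q R : H →L[ℂ] H} (hQ : Q.IsPositive) (hR : 0 ≤ R)
    (hsq : Q * Q = R) : Q = cfc (fun t : ℝ => Real.sqrt t) R := by
  have hQ0 : 0 ≤ Q := (ContinuousLinearMap.nonneg_iff_isPositive Q).mpr hQ
  have h1 : CFC.sqrt R = Q := CFC.sqrt_unique hsq hQ0
  have hs0 : 0 ≤ cfc (fun t : ℝ => Real.sqrt t) R := cfc_nonneg fun x _ => Real.sqrt_nonneg x
  have hssq : cfc (fun t : ℝ => Real.sqrt t) R * cfc (fun t : ℝ => Real.sqrt t) R = R := by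
    rw [← cfc_mul _ _ R (by fun_prop) (by fun_prop),
      cfc_congr (g := fun t : ℝ => t)
        (fun x hx => Real.mul_self_sqrt (spectrum_nonneg_of_nonneg hR hx))]
    exact cfc_id ℝ R
  have h2 : CFC.sqrt R = cfc (fun t : ℝ => Real.sqrt t) R := CFC.sqrt_unique hssq hs0
  rw [← h1, h2]

end Aux

open ContinuousLinearMap RCLike Polynomial
open scoped InnerProductSpace

/-- If `T ≥ 0` has range in `K = ker P_A ∩ ker P_B`, then `T^{1/2}` also has range
in `K`, `Φ_{P_A}(T) = Φ_{P_B}(T) = T`, and `T` is a fixed point of the alternating residual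
flow (the flow started at `T` is constant, so `R_∞(T) = T`).  Together with the fact that every
strong limit of the flow is positive with range in `K`, this shows that the set of attainable
limits `{R_∞(R) : R ∈ B(H)_+}` is exactly the positive operators supported on `K`. -/
theorem attainable_limits_eq_positive_cone_on_K
    {H : Type*} [NormedAddCommGroup H] [InnerProductSpace ℂ H] [CompleteSpace H]
    (PA PB : H →L[ℂ] H)
    (hPAsa : IsSelfAdjoint PA) (hPAidem : IsIdempotentElem PA)
    (hPBsa : IsSelfAdjoint PB) (hPBidem : IsIdempotentElem PB)
    (T QT : H →L[ℂ] H) (hT : T.IsPositive)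
    (hQTpos : QT.IsPositive) (hQTsq : QT * QT = T)
    (hTK : LinearMap.range (T : H →ₗ[ℂ] H) ≤ LinearMap.ker (PA : H →ₗ[ℂ] H) ⊓ LinearMap.ker (PB : H →ₗ[ℂ] H)) :
    (LinearMap.range (QT : H →ₗ[ℂ] H) ≤ LinearMap.ker (PA : H →ₗ[ℂ] H) ⊓ LinearMap.ker (PB : H →ₗ[ℂ] H)) ∧
    (QT * (1 - PA) * QT = T ∧ QT * (1 - PB) * QT = T) ∧
    (∀ (R Q : ℕ → (H →L[ℂ] H)), R 0 = T →
      (∀ n, (Q n).IsPositive) → (∀ n, Q n * Q n = R n) →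
      (∀ n, R (n + 1) = Q n * (1 - (if Even n then PB else PA)) * Q n) →
      ∀ n, R n = T) ∧
    (∀ (R Q : ℕ → (H →L[ℂ] H)) (Rinf : H →L[ℂ] H), (R 0).IsPositive →
      (∀ n, (Q n).IsPositive) → (∀ n, Q n * Q n = R n) →
      (∀ n, R (n + 1) = Q n * (1 - (if Even n then PB else PA)) * Q n) →
      (∀ x : H, Tendsto (fun n => R n x) atTop (𝓝 (Rinf x))) →
      Rinf.IsPositive ∧ LinearMap.range (Rinf : H →ₗ[ℂ] H) ≤ LinearMap.ker (PA : H →ₗ[ℂ] H) ⊓ LinearMap.ker (PB : H →ₗ[ℂ] H)) := by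
  have hTA : ∀ x, PA (T x) = 0 := fun x =>
    LinearMap.mem_ker.mp (Submodule.mem_inf.mp (hTK ⟨x, rfl⟩)).1
  have hTB : ∀ x, PB (T x) = 0 := fun x =>
    LinearMap.mem_ker.mp (Submodule.mem_inf.mp (hTK ⟨x, rfl⟩)).2
  have hQA : ∀ x, PA (QT x) = 0 := aux_kill hPAsa hQTpos hQTsq hTA
  have hQB : ∀ x, PB (QT x) = 0 := aux_kill hPBsa hQTpos hQTsq hTB
  -- the fixed point computation, for a general positive square root of `T`
  have hfix : ∀ (P Q' : H →L[ℂ] H), IsSelfAdjoint P → (∀ x, P (T x) = 0) →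
      Q'.IsPositive → Q' * Q' = T → Q' * (1 - P) * Q' = T := by
    intro P Q' hPsa hPT hQ'pos hQ'sq
    have hkill : ∀ x, P (Q' x) = 0 := aux_kill hPsa hQ'pos hQ'sq hPT
    have hzero : Q' * P * Q' = 0 := by
      ext x
      show Q' (P (Q' x)) = 0
      rw [hkill x, map_zero]
    have hexp : Q' * (1 - P) * Q' = Q' * Q' - Q' * P * Q' := by noncomm_ring
    rw [hexp, hzero, sub_zero, hQ'sq]
  refine ⟨?_, ⟨hfix PA QT hPAsa hTA hQTpos hQTsq, hfix PB QT hPBsa hTB hQTpos hQTsq⟩, ?_, ?_⟩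
  · rintro y ⟨x, rfl⟩
    exact Submodule.mem_inf.mpr ⟨LinearMap.mem_ker.mpr (hQA x), LinearMap.mem_ker.mpr (hQB x)⟩
  · intro R Q hR0 hQp hQs hRrec n
    induction n with
    | zero => exact hR0
    | succ n ih =>
      rw [hRrec n]
      by_cases hn : Even n
      · simp only [hn, if_pos]
        exact hfix PB (Q n) hPBsa hTB (hQp n) (ih ▸ hQs n)
      · simp only [hn, if_neg, if_false]
        exact hfix PA (Q n) hPAsa hTA (hQp n) (ih ▸ hQs n)
  · intro R Q Rinf hR0 hQp hQs hRrec hconv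
    rcases subsingleton_or_nontrivial H with hs | hn
    · haveI : Subsingleton (H →L[ℂ] H) := ⟨fun f g => ContinuousLinearMap.ext
        fun x => Subsingleton.elim _ _⟩
      refine ⟨Subsingleton.elim (R 0) Rinf ▸ hR0, ?_⟩
      intro y _
      have hy : y = 0 := Subsingleton.elim y 0
      rw [hy]
      exact Submodule.zero_mem _
    -- setup
    set Pr : ℕ → (H →L[ℂ] H) := fun n => if Even n then PB else PA with hPr
    have hPrsa : ∀ n, IsSelfAdjoint (Pr n) := by
      intro n; by_cases hn : Even n <;> simp [hPr, hn, hPAsa, hPBsa]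
    have hPridem : ∀ n, IsIdempotentElem (Pr n) := by
      intro n; by_cases hn : Even n <;> simp [hPr, hn, hPAidem, hPBidem]
    have hQsa : ∀ n, IsSelfAdjoint (Q n) := fun n => (hQp n).isSelfAdjoint
    have hRpos : ∀ n, (R n).IsPositive := by
      intro n
      induction n with
      | zero => exact hR0
      | succ n ih =>
        rw [hRrec n]
        have hsa1 : IsSelfAdjoint (1 - Pr n) := by
          rw [IsSelfAdjoint, star_sub, star_one, (hPrsa n).star_eq]
        have h1 : (1 - Pr n).IsPositive := aux_proj_pos hsa1 (hPridem n).one_sub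
        exact aux_pos_conj h1 (hQsa n)
    have hmono : ∀ n, R (n + 1) ≤ R n := by
      intro n
      rw [ContinuousLinearMap.le_def]
      have hdiff : R n - R (n + 1) = Q n * Pr n * Q n := by
        rw [hRrec n, ← hQs n]; noncomm_ring
      rw [hdiff]
      exact aux_pos_conj (aux_proj_pos (hPrsa n) (hPridem n)) (hQsa n)
    have hle0 : ∀ n, R n ≤ R 0 := by
      intro n
      induction n with
      | zero => exact le_refl _
      | succ n ih => exact (hmono n).trans ih
    have hnormR : ∀ n, ‖R n‖ ≤ ‖R 0‖ := fun n =>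
      CStarAlgebra.norm_le_norm_of_nonneg_of_le
        ((ContinuousLinearMap.nonneg_iff_isPositive _).mpr (hRpos n)) (hle0 n)
    have hnormQ : ∀ n, ‖Q n‖ ≤ Real.sqrt ‖R 0‖ := by
      intro n
      have h1 : ‖Q n * Q n‖ = ‖Q n‖ * ‖Q n‖ := by
        have h0 := CStarRing.norm_star_mul_self (x := Q n)
        rwa [(hQsa n).star_eq] at h0
      rw [← Real.sqrt_mul_self (norm_nonneg (Q n))]
      apply Real.sqrt_le_sqrt
      rw [← h1, hQs n]
      exact hnormR n
    -- telescoping identity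
    have happly : ∀ n (x : H), R (n + 1) x = Q n (Q n x) - Q n (Pr n (Q n x)) := by
      intro n x
      rw [hRrec n]
      show Q n ((1 - Pr n) (Q n x)) = _
      rw [ContinuousLinearMap.sub_apply, ContinuousLinearMap.one_apply, map_sub]
    have hRapp : ∀ n (x : H), R n x = Q n (Q n x) := by
      intro n x; rw [← hQs n]; rfl
    have htel : ∀ n (x : H), ‖Pr n (Q n x)‖ ^ 2 =
        re ⟪R n x, x⟫_ℂ - re ⟪R (n + 1) x, x⟫_ℂ := by
      intro n x
      rw [happly n x, hRapp n x, inner_sub_left, map_sub,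
        aux_symm (hQsa n) (Pr n (Q n x)) x, aux_symm (hQsa n) (Q n x) x,
        aux_proj_re (hPrsa n) (hPridem n) (Q n x)]
      ring
    have hfx : ∀ x : H, Filter.Tendsto (fun n => re ⟪R n x, x⟫_ℂ) Filter.atTop
        (nhds (re ⟪Rinf x, x⟫_ℂ)) := fun x =>
      (RCLike.continuous_re.tendsto _).comp ((hconv x).inner tendsto_const_nhds)
    have hPQnorm : ∀ x : H, Filter.Tendsto (fun n => ‖Pr n (Q n x)‖) Filter.atTop (nhds 0) := by
      intro x
      have hsq : Filter.Tendsto (fun n => ‖Pr n (Q n x)‖ ^ 2) Filter.atTop (nhds 0) := by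
        have h2 := (hfx x).sub ((hfx x).comp (Filter.tendsto_add_atTop_nat 1))
        rw [sub_self] at h2
        refine h2.congr fun n => ?_
        exact (htel n x).symm
      have h3 := (Real.continuous_sqrt.tendsto 0).comp hsq
      have h4 : (fun n => Real.sqrt (‖Pr n (Q n x)‖ ^ 2)) = fun n => ‖Pr n (Q n x)‖ :=
        funext fun n => Real.sqrt_sq (norm_nonneg _)
      rw [Function.comp_def, h4] at h3
      simpa using h3
    have hPQvec : ∀ x : H, Filter.Tendsto (fun n => Pr n (Q n x)) Filter.atTop (nhds 0) :=
      fun x => tendsto_zero_iff_norm_tendsto_zero.mpr (hPQnorm x)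
    -- strong convergence of powers
    have hpow : ∀ (k : ℕ) (x : H), Filter.Tendsto (fun n => ((R n) ^ k) x) Filter.atTop
        (nhds ((Rinf ^ k) x)) := by
      intro k
      induction k with
      | zero => intro x; simpa using tendsto_const_nhds
      | succ k ih =>
        intro x
        have heq : ∀ n, ((R n) ^ (k + 1)) x = R n (((R n) ^ k) x) := by
          intro n; rw [pow_succ']; rfl
        have heq2 : (Rinf ^ (k + 1)) x = Rinf ((Rinf ^ k) x) := by rw [pow_succ']; rfl
        rw [tendsto_iff_norm_sub_tendsto_zero]
        have hbound : ∀ n, ‖((R n) ^ (k + 1)) x - (Rinf ^ (k + 1)) x‖ ≤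
            ‖R 0‖ * ‖((R n) ^ k) x - (Rinf ^ k) x‖ + ‖R n ((Rinf ^ k) x) - Rinf ((Rinf ^ k) x)‖ := by
          intro n
          rw [heq, heq2]
          have : R n (((R n) ^ k) x) - Rinf ((Rinf ^ k) x) =
              R n (((R n) ^ k) x - (Rinf ^ k) x) + (R n ((Rinf ^ k) x) - Rinf ((Rinf ^ k) x)) := by
            rw [map_sub]; abel
          rw [this]
          refine (norm_add_le _ _).trans (add_le_add_left ?_ _)
          refine ((R n).le_opNorm _).trans ?_
          exact mul_le_mul_of_nonneg_right (hnormR n) (norm_nonneg _)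
        have hg : Filter.Tendsto (fun n => ‖R 0‖ * ‖((R n) ^ k) x - (Rinf ^ k) x‖ +
            ‖R n ((Rinf ^ k) x) - Rinf ((Rinf ^ k) x)‖) Filter.atTop (nhds 0) := by
          have h1 : Filter.Tendsto (fun n => ‖((R n) ^ k) x - (Rinf ^ k) x‖)
              Filter.atTop (nhds 0) := by
            rw [← tendsto_iff_norm_sub_tendsto_zero]
            exact ih x
          have h2 : Filter.Tendsto (fun n => ‖R n ((Rinf ^ k) x) - Rinf ((Rinf ^ k) x)‖)
              Filter.atTop (nhds 0) := by
            rw [← tendsto_iff_norm_sub_tendsto_zero]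
            exact hconv _
          simpa using (h1.const_mul (‖R 0‖)).add h2
        exact squeeze_zero (fun n => norm_nonneg _) hbound hg
    have haev : ∀ (p : ℝ[X]) (x : H), Filter.Tendsto (fun n => (aeval (R n) p) x)
        Filter.atTop (nhds ((aeval Rinf p) x)) := by
      intro p x
      have hrw : ∀ (S : H →L[ℂ] H), (aeval S p) x =
          ∑ i ∈ Finset.range (p.natDegree + 1), p.coeff i • ((S ^ i) x) := by
        intro S
        rw [aeval_eq_sum_range]
        rw [ContinuousLinearMap.sum_apply]
        simp
      simp only [hrw]
      exact tendsto_finset_sum _ fun i _ => (hpow i x).const_smul _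
    -- identification of Q n with the cfc square root, and polynomial approximation
    have hQcfc : ∀ n, Q n = cfc (fun t : ℝ => Real.sqrt t) (R n) := fun n =>
      aux_sqrt_eq (hQp n) ((ContinuousLinearMap.nonneg_iff_isPositive _).mpr (hRpos n)) (hQs n)
    have happrox : ∀ δ : ℝ, 0 < δ → ∃ p : ℝ[X], ∀ n, ‖Q n - aeval (R n) p‖ ≤ δ := by
      intro δ hδ
      obtain ⟨p, hp⟩ := aux_weierstrass (C := ‖R 0‖) hδ
      refine ⟨p, fun n => ?_⟩
      have hRsa : IsSelfAdjoint (R n) := (hRpos n).isSelfAdjoint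
      have hdiffcfc : Q n - aeval (R n) p =
          cfc (fun t : ℝ => Real.sqrt t - p.eval t) (R n) := by
        rw [hQcfc n, ← cfc_polynomial p (R n) hRsa]
        rw [cfc_sub _ _ (R n) (by fun_prop) (by fun_prop)]
      rw [hdiffcfc]
      refine norm_cfc_le hδ.le fun t ht => ?_
      have ht0 : 0 ≤ t := spectrum_nonneg_of_nonneg
        ((ContinuousLinearMap.nonneg_iff_isPositive _).mpr (hRpos n)) ht
      have ht1 : t ≤ ‖R 0‖ := by
        have := spectrum.norm_le_norm_of_mem ht
        rw [Real.norm_eq_abs, abs_of_nonneg ht0] at this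
        exact this.trans (hnormR n)
      simpa [Real.norm_eq_abs] using hp t ⟨ht0, ht1⟩
    -- Cauchy property of `Q n x`
    have hcauchy : ∀ x : H, CauchySeq (fun n => Q n x) := by
      intro x
      rw [Metric.cauchySeq_iff]
      intro ε hε
      have hδ : 0 < ε / 4 / (‖x‖ + 1) := by positivity
      obtain ⟨p, hp⟩ := happrox _ hδ
      have hterm : ∀ n, ‖Q n x - (aeval (R n) p) x‖ ≤ ε / 4 := by
        intro n
        have h1 : ‖(Q n - aeval (R n) p) x‖ ≤ ε / 4 / (‖x‖ + 1) * ‖x‖ :=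
          ((Q n - aeval (R n) p).le_opNorm x).trans
            (mul_le_mul_of_nonneg_right (hp n) (norm_nonneg _))
        rw [ContinuousLinearMap.sub_apply] at h1
        refine h1.trans ?_
        rw [div_mul_eq_mul_div, div_le_iff₀ (by positivity)]
        have hx1 : ‖x‖ ≤ ‖x‖ + 1 := by linarith
        calc ε / 4 * ‖x‖ ≤ ε / 4 * (‖x‖ + 1) := by
              exact mul_le_mul_of_nonneg_left hx1 (by positivity)
          _ = ε / 4 * (‖x‖ + 1) := rfl
      have hpc : CauchySeq (fun n => (aeval (R n) p) x) := (haev p x).cauchySeq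
      rw [Metric.cauchySeq_iff] at hpc
      obtain ⟨N, hN⟩ := hpc (ε / 4) (by positivity)
      refine ⟨N, fun m hm n hn => ?_⟩
      have h1 := hterm m
      have h2 := hterm n
      have h3 := hN m hm n hn
      rw [dist_eq_norm] at h3 ⊢
      calc ‖Q m x - Q n x‖ ≤ ‖Q m x - (aeval (R m) p) x‖ + ‖(aeval (R m) p) x - (aeval (R n) p) x‖
            + ‖(aeval (R n) p) x - Q n x‖ := by
            have : Q m x - Q n x = (Q m x - (aeval (R m) p) x) + ((aeval (R m) p) x
                - (aeval (R n) p) x) + ((aeval (R n) p) x - Q n x) := by abel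
            rw [this]
            exact (norm_add_le _ _).trans (add_le_add_left (norm_add_le _ _) _)
        _ < ε / 4 + ε / 4 + ε / 4 := by
            refine add_lt_add_of_lt_of_le (add_lt_add_of_le_of_lt h1 h3) ?_
            rw [norm_sub_rev]
            exact h2
        _ < ε := by linarith
    -- conclusion
    have hkey : ∀ x : H, PA (Rinf x) = 0 ∧ PB (Rinf x) = 0 := by
      intro x
      obtain ⟨v, hv⟩ := cauchySeq_tendsto_of_complete (hcauchy x)
      constructor
      · -- odd subsequence, Pr (2k+1) = PA
        have hφ : Filter.Tendsto (fun k : ℕ => 2 * k + 1) Filter.atTop Filter.atTop :=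
          Filter.tendsto_atTop_mono (fun k => by simp only [id_eq]; omega) Filter.tendsto_id
        have hPrA : ∀ k : ℕ, Pr (2 * k + 1) = PA := by
          intro k
          have : ¬ Even (2 * k + 1) := by simp [Nat.even_add_one, hPr]
          simp [hPr, this]
        refine aux_limit_kill (c := Real.sqrt ‖R 0‖) (x := x) (v := v)
          (fun k => hnormQ (2 * k + 1)) (hv.comp hφ) ?_ ?_
        · have := (hconv x).comp hφ
          refine this.congr fun k => ?_
          exact (hRapp (2 * k + 1) x).symm ▸ rfl
        · intro y
          have h1 := (hPQvec y).comp hφ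
          refine h1.congr fun k => ?_
          rw [Function.comp_apply, hPrA k]
      · -- even subsequence, Pr (2k) = PB
        have hφ : Filter.Tendsto (fun k : ℕ => 2 * k) Filter.atTop Filter.atTop :=
          Filter.tendsto_atTop_mono (fun k => by simp only [id_eq]; omega) Filter.tendsto_id
        have hPrB : ∀ k : ℕ, Pr (2 * k) = PB := by
          intro k
          have : Even (2 * k) := even_two_mul k
          simp [hPr, this]
        refine aux_limit_kill (c := Real.sqrt ‖R 0‖) (x := x) (v := v)
          (fun k => hnormQ (2 * k)) (hv.comp hφ) ?_ ?_
        · have := (hconv x).comp hφ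
          refine this.congr fun k => ?_
          exact (hRapp (2 * k) x).symm ▸ rfl
        · intro y
          have h1 := (hPQvec y).comp hφ
          refine h1.congr fun k => ?_
          rw [Function.comp_apply, hPrB k]
    constructor
    · refine isPositive_def'.mpr ⟨?_, ?_⟩
      · rw [isSelfAdjoint_iff_isSymmetric]
        intro x y
        have h1 : Filter.Tendsto (fun n => ⟪R n x, y⟫_ℂ) Filter.atTop
            (nhds ⟪Rinf x, y⟫_ℂ) := (hconv x).inner tendsto_const_nhds
        have h2 : Filter.Tendsto (fun n => ⟪R n x, y⟫_ℂ) Filter.atTop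
            (nhds ⟪x, Rinf y⟫_ℂ) := by
          have h3 : Filter.Tendsto (fun n => ⟪x, R n y⟫_ℂ) Filter.atTop
              (nhds ⟪x, Rinf y⟫_ℂ) := Filter.Tendsto.inner tendsto_const_nhds (hconv y)
          refine h3.congr fun n => ?_
          exact (aux_symm (hRpos n).isSelfAdjoint x y).symm
        exact tendsto_nhds_unique h1 h2
      · intro x
        rw [ContinuousLinearMap.reApplyInnerSelf_apply]
        refine ge_of_tendsto' (hfx x) fun n => ?_
        exact (hRpos n).2 x
    · rintro y ⟨x, rfl⟩
      exact Submodule.mem_inf.mpr ⟨LinearMap.mem_ker.mpr (hkey x).1,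
        LinearMap.mem_ker.mpr (hkey x).2⟩
end

section
/- There exist a positive operator R_0 and orthogonal projections P_A, P_B on a finite-dimensional Hilbert space such that the limit R_∞ of the alternating residual flow is 0 while the shorted operator S = R_0|_K with K = ker P_A ∩ ker P_B is nonzero; hence R_∞ = S fails in general. -/
open Filter Topology

lemma psd2 (a b d : ℝ) (h1 : 0 ≤ a) (h2 : 0 ≤ d) (h3 : b^2 ≤ a*d) :
    (!![a,b;b,d]).PosSemidef := by
  refine Matrix.PosSemidef.of_dotProduct_mulVec_nonneg ?_ ?_
  · ext i j
    fin_cases i <;> fin_cases j <;> simp [Matrix.conjTranspose_apply]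
  · intro x
    simp only [dotProduct, Matrix.mulVec, Fin.sum_univ_two, Matrix.of_apply,
      Matrix.cons_val', Matrix.cons_val_zero, Matrix.cons_val_one, Matrix.head_cons,
      Matrix.empty_val', Matrix.cons_val_fin_one, Matrix.head_fin_const, RCLike.star_def,
      Pi.star_apply, star_trivial]
    rcases h1.eq_or_lt with h | h
    · have hb : b = 0 := by nlinarith [sq_nonneg b]
      subst hb; subst h
      nlinarith [mul_nonneg h2 (sq_nonneg (x 1))]
    · nlinarith [sq_nonneg (a * x 0 + b * x 1), mul_pos h h, sq_nonneg (x 1),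
        mul_nonneg (sub_nonneg.mpr h3) (sq_nonneg (x 1))]

lemma psd_smul {B : Matrix (Fin 2) (Fin 2) ℝ} (hB : B.PosSemidef) {c : ℝ} (hc : 0 ≤ c) :
    (c • B).PosSemidef := by
  refine Matrix.PosSemidef.of_dotProduct_mulVec_nonneg ?_ (fun x => ?_)
  · have hBt : B.transpose = B := by simpa using hB.1.eq
    simp [Matrix.IsHermitian, Matrix.conjTranspose_smul, hBt]
  · simp only [Matrix.smul_mulVec, dotProduct_smul, smul_eq_mul]
    exact mul_nonneg hc (hB.dotProduct_mulVec_nonneg x)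

open scoped MatrixOrder Matrix.Norms.L2Operator in
theorem Matrix.PosSemidef.eq_of_sq_eq_sq {A B : Matrix (Fin 2) (Fin 2) ℝ} (hA : A.PosSemidef)
    (hB : B.PosSemidef) (h : A ^ 2 = B ^ 2) : A = B := by
  have hA' : 0 ≤ A := Matrix.nonneg_iff_posSemidef.mpr hA
  have hB' : 0 ≤ B := Matrix.nonneg_iff_posSemidef.mpr hB
  exact (CFC.sq_eq_sq_iff A B).mp h

/-- There exist a positive operator `R_0` and orthogonal projections `P_A, P_B`
on a finite-dimensional Hilbert space (here `ℝ²`, operators as `2×2` matrices) such that the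
limit of the alternating residual flow is `0`, while the shorted operator `S = R_0|_K` with
`K = ker P_A ∩ ker P_B` is nonzero; hence `R_∞ = S` fails in general. -/
theorem exists_flow_limit_zero_but_shorted_nonzero :
    ∃ R0 PA PB : Matrix (Fin 2) (Fin 2) ℝ,
      R0.PosSemidef ∧
      PA.IsHermitian ∧ PA * PA = PA ∧
      PB.IsHermitian ∧ PB * PB = PB ∧
      -- the alternating residual flow started at R0 converges (strongly) to 0:
      (∀ R Q : ℕ → Matrix (Fin 2) (Fin 2) ℝ,
        R 0 = R0 →
        (∀ n, (Q n).PosSemidef) → (∀ n, (Q n) ^ 2 = R n) →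
        (∀ n, R (n + 1) = Q n * (1 - (if Even n then PB else PA)) * Q n) →
        Tendsto R atTop (𝓝 0)) ∧
      -- yet there is a nonzero shorted operator S = R0|_K with K = ker PA ∩ ker PB:
      (∃ S : Matrix (Fin 2) (Fin 2) ℝ,
        S.PosSemidef ∧ (R0 - S).PosSemidef ∧
        LinearMap.range S.mulVecLin ≤
          LinearMap.ker PA.mulVecLin ⊓ LinearMap.ker PB.mulVecLin ∧
        (∀ Y : Matrix (Fin 2) (Fin 2) ℝ, Y.PosSemidef → (R0 - Y).PosSemidef →
          LinearMap.range Y.mulVecLin ≤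
            LinearMap.ker PA.mulVecLin ⊓ LinearMap.ker PB.mulVecLin →
          (S - Y).PosSemidef) ∧
        S ≠ 0) := by
    classical
  have hA : (!![(3:ℝ),3;3,4]).PosSemidef := psd2 3 3 4 (by norm_num) (by norm_num) (by norm_num)
  have hBpsd : (!![(9:ℝ)/5,12/5;12/5,16/5]).PosSemidef :=
    psd2 (9/5) (12/5) (16/5) (by norm_num) (by norm_num) (by norm_num)
  have hA2 : (!![(3:ℝ),3;3,4]) ^ 2 = !![18,21;21,25] := by
    rw [pow_two]; norm_num [Matrix.mul_fin_two]
  have h1P : (1 : Matrix (Fin 2) (Fin 2) ℝ) - !![1,0;0,0] = !![0,0;0,1] := by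
    norm_num [Matrix.one_fin_two, ← Matrix.ext_iff, Fin.forall_fin_two]
  have hAM : (!![(3:ℝ),3;3,4]) * ((1 : Matrix (Fin 2) (Fin 2) ℝ) - !![1,0;0,0]) * !![3,3;3,4]
      = !![9,12;12,16] := by
    rw [h1P]; norm_num [Matrix.mul_fin_two]
  have hBM : (!![(9:ℝ)/5,12/5;12/5,16/5]) * ((1 : Matrix (Fin 2) (Fin 2) ℝ) - !![1,0;0,0])
      * !![9/5,12/5;12/5,16/5] = ((16:ℝ)/25) • !![9,12;12,16] := by
    rw [h1P]
    norm_num [Matrix.mul_fin_two, Matrix.smul_of, Matrix.smul_cons,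
      ← Matrix.ext_iff, Fin.forall_fin_two]
  have hB2 : ∀ n : ℕ, (((4:ℝ)/5) ^ n • !![(9:ℝ)/5,12/5;12/5,16/5]) ^ 2
      = ((16:ℝ)/25) ^ n • !![9,12;12,16] := by
    intro n
    have hBB : (!![(9:ℝ)/5,12/5;12/5,16/5]) ^ 2 = !![9,12;12,16] := by
      rw [pow_two]
      norm_num [Matrix.mul_fin_two, ← Matrix.ext_iff, Fin.forall_fin_two]
    rw [smul_pow, hBB]
    congr 1
    rw [← pow_mul, mul_comm n 2, pow_mul]; norm_num
  refine ⟨!![18,21;21,25], !![1,0;0,0], !![1,0;0,0],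
    psd2 18 21 25 (by norm_num) (by norm_num) (by norm_num),
    ?_, ?_, ?_, ?_, ?_, ?_⟩
  · ext i j
    fin_cases i <;> fin_cases j <;> simp [Matrix.conjTranspose_apply]
  · ext i j
    rw [Matrix.mul_fin_two]
    fin_cases i <;> fin_cases j <;> norm_num
  · ext i j
    fin_cases i <;> fin_cases j <;> simp [Matrix.conjTranspose_apply]
  · ext i j
    rw [Matrix.mul_fin_two]
    fin_cases i <;> fin_cases j <;> norm_num
  -- flow converges to 0
  · intro R Q hR00 hQpsd hQsq hstep
    simp only [ite_self] at hstep
    have hQ0 : Q 0 = !![(3:ℝ),3;3,4] :=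
      (hQpsd 0).eq_of_sq_eq_sq hA (by rw [hQsq 0, hR00, hA2])
    have hform : ∀ n, R (n+1) = ((16:ℝ)/25) ^ n • !![9,12;12,16] := by
      intro n
      induction n with
      | zero => rw [hstep 0, hQ0, hAM]; simp
      | succ n ih =>
        have hsm := psd_smul hBpsd (pow_nonneg (by norm_num : (0:ℝ) ≤ 4/5) n)
        have hQn : Q (n+1) = ((4:ℝ)/5) ^ n • !![9/5,12/5;12/5,16/5] :=
          (hQpsd (n+1)).eq_of_sq_eq_sq hsm (by rw [hQsq (n+1), ih, hB2])
        rw [hstep (n+1), hQn, Matrix.smul_mul, Matrix.mul_smul, Matrix.smul_mul, hBM,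
          smul_smul, smul_smul]
        congr 1
        rw [pow_succ, ← mul_pow]
        norm_num
    have hlim : Tendsto (fun n : ℕ => ((16:ℝ)/25) ^ n • (!![9,12;12,16] : Matrix (Fin 2) (Fin 2) ℝ))
        atTop (𝓝 0) := by
      have h0 : Tendsto (fun n : ℕ => ((16:ℝ)/25) ^ n) atTop (𝓝 0) :=
        tendsto_pow_atTop_nhds_zero_of_lt_one (by norm_num) (by norm_num)
      simpa using h0.smul_const (!![9,12;12,16] : Matrix (Fin 2) (Fin 2) ℝ)
    exact (tendsto_add_atTop_iff_nat 1).mp (hlim.congr fun n => (hform n).symm)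
  -- shorted operator
  · refine ⟨!![0,0;0,1/2], psd2 0 0 (1/2) le_rfl (by norm_num) (by norm_num), ?_, ?_, ?_, ?_⟩
    · have : (!![(18:ℝ),21;21,25]) - !![0,0;0,1/2] = !![18,21;21,49/2] := by
        ext i j
        fin_cases i <;> fin_cases j <;> norm_num
      rw [this]
      exact psd2 18 21 (49/2) (by norm_num) (by norm_num) (by norm_num)
    · rintro x ⟨y, rfl⟩
      constructor <;>
      · show (!![(1:ℝ),0;0,0]).mulVecLin _ = 0
        ext i
        fin_cases i <;>
          simp [Matrix.mulVecLin, Matrix.mulVec, dotProduct, Fin.sum_univ_two]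
    · intro Y hY hRY hrange
      have h00 : Y 0 0 = 0 := by
        have := (hrange ⟨Pi.single 0 1, rfl⟩).1
        have h0 := congrFun this 0
        simpa [Matrix.mulVecLin, Matrix.mulVec, dotProduct, Fin.sum_univ_two,
          Pi.single_apply, Matrix.vecHead] using h0
      have h01 : Y 0 1 = 0 := by
        have := (hrange ⟨Pi.single 1 1, rfl⟩).1
        have h0 := congrFun this 0
        simpa [Matrix.mulVecLin, Matrix.mulVec, dotProduct, Fin.sum_univ_two,
          Pi.single_apply, Matrix.vecHead] using h0
      have h10 : Y 1 0 = 0 := by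
        have := congrFun (congrFun hY.1.eq 1) 0
        simp only [Matrix.conjTranspose_apply, star_trivial] at this
        rw [← this, h01]
      have ht : Y 1 1 ≤ 1/2 := by
        have := hRY.dotProduct_mulVec_nonneg ![7, -6]
        simp only [dotProduct, Matrix.mulVec, Fin.sum_univ_two, Matrix.sub_apply,
          RCLike.star_def, Pi.star_apply, star_trivial] at this
        norm_num [h00, h01, h10] at this
        nlinarith
      have heq : (!![(0:ℝ),0;0,1/2]) - Y = !![0,0;0,1/2 - Y 1 1] := by
        ext i j
        fin_cases i <;> fin_cases j <;> simp [h00, h01, h10]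
      rw [heq]
      exact psd2 0 0 (1/2 - Y 1 1) le_rfl (by linarith) (by nlinarith)
    · intro h
      have := congrFun (congrFun h 1) 1
      norm_num at this
end

section
/- Let R_0 ≥ 0 and H_{R_0} = closure of ran(R_0^{1/2}). For every R with 0 ≤ R ≤ R_0 there exists a unique positive contraction T on H_{R_0} such that R = R_0^{1/2} T R_0^{1/2}. -/
open ContinuousLinearMap

local notation "⟪" x ", " y "⟫" => @inner ℂ _ _ x y

/-- Auxiliary: given `‖S x‖ ≤ ‖Q0 x‖` for all `x`, there is a contraction `C` with
`C (Q0 x) = S x` and `C = 0` on the orthogonal complement of the closure of `ran Q0`. -/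
lemma aux_exists_contraction {H : Type*} [NormedAddCommGroup H] [InnerProductSpace ℂ H]
    [CompleteSpace H] (Q0 S : H →L[ℂ] H) (hb : ∀ x, ‖S x‖ ≤ ‖Q0 x‖) :
    ∃ C : H →L[ℂ] H, ‖C‖ ≤ 1 ∧ (∀ x, C (Q0 x) = S x) ∧
      ∀ x ∈ ((LinearMap.range (Q0 : H →ₗ[ℂ] H)).topologicalClosure)ᗮ, C x = 0 := by
  set K := (LinearMap.range (Q0 : H →ₗ[ℂ] H)).topologicalClosure with hKdef
  haveI : CompleteSpace K := (LinearMap.range (Q0 : H →ₗ[ℂ] H)).isClosed_topologicalClosure.completeSpace_coe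
  have key : ∀ x y : H, Q0 x = Q0 y → S x = S y := by
    intro x y h
    have h2 := hb (x - y)
    rw [map_sub, map_sub, h, sub_self, norm_zero] at h2
    exact sub_eq_zero.mp (norm_le_zero_iff.mp h2)
  have hwd : ∀ u : LinearMap.range (Q0 : H →ₗ[ℂ] H), Q0 u.2.choose = (u : H) := fun u => u.2.choose_spec
  let F : (LinearMap.range (Q0 : H →ₗ[ℂ] H)) →ₗ[ℂ] H :=
    { toFun := fun u => S u.2.choose
      map_add' := by
        intro u v
        have h1 : Q0 ((u + v).2.choose) = Q0 (u.2.choose + v.2.choose) := by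
          rw [hwd (u + v), map_add, hwd u, hwd v, Submodule.coe_add]
        calc S (u + v).2.choose = S (u.2.choose + v.2.choose) := key _ _ h1
          _ = S u.2.choose + S v.2.choose := map_add S _ _
      map_smul' := by
        intro c u
        have h1 : Q0 ((c • u).2.choose) = Q0 (c • u.2.choose) := by
          rw [hwd (c • u), map_smul, hwd u, Submodule.coe_smul]
        calc S (c • u).2.choose = S (c • u.2.choose) := key _ _ h1
          _ = c • S u.2.choose := map_smul S _ _ }
  have Fb : ∀ u : LinearMap.range (Q0 : H →ₗ[ℂ] H), ‖F u‖ ≤ 1 * ‖u‖ := by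
    intro u
    rw [one_mul]
    calc ‖F u‖ = ‖S u.2.choose‖ := rfl
      _ ≤ ‖Q0 u.2.choose‖ := hb _
      _ = ‖(u : H)‖ := by rw [hwd u]
      _ = ‖u‖ := rfl
  let Fc : (LinearMap.range (Q0 : H →ₗ[ℂ] H)) →L[ℂ] H := F.mkContinuous 1 Fb
  have hFcn : ‖Fc‖ ≤ 1 := F.mkContinuous_norm_le zero_le_one Fb
  let e0 : (LinearMap.range (Q0 : H →ₗ[ℂ] H)) →ₗ[ℂ] K :=
    Submodule.inclusion (LinearMap.range (Q0 : H →ₗ[ℂ] H)).le_topologicalClosure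
  let e : (LinearMap.range (Q0 : H →ₗ[ℂ] H)) →L[ℂ] K := e0.mkContinuous 1 (fun u => by
    rw [one_mul]
    rfl)
  have h_e : ∀ u : (LinearMap.range (Q0 : H →ₗ[ℂ] H)), ‖u‖ ≤ ((1 : NNReal) : ℝ) * ‖e u‖ := by
    intro u
    rw [NNReal.coe_one, one_mul]
    rfl
  have h_dense : DenseRange e := by
    intro y
    rw [closure_subtype]
    have himg : (Subtype.val '' Set.range e) = ((LinearMap.range (Q0 : H →ₗ[ℂ] H) : Submodule ℂ H) : Set H) := by
      ext z
      constructor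
      · rintro ⟨w, ⟨u, rfl⟩, rfl⟩
        exact u.2
      · intro hz
        exact ⟨e ⟨z, hz⟩, ⟨⟨z, hz⟩, rfl⟩, rfl⟩
    rw [himg, ← Submodule.topologicalClosure_coe]
    exact y.2
  let hui := (ContinuousLinearMap.isUniformEmbedding_of_bound e h_e).isUniformInducing
  let Cext : K →L[ℂ] H := Fc.extend e
  have hCextn : ‖Cext‖ ≤ 1 := by
    have h := Fc.opNorm_extend_le h_dense h_e
    calc ‖Cext‖ ≤ ((1 : NNReal) : ℝ) * ‖Fc‖ := h
      _ ≤ 1 := by rw [NNReal.coe_one, one_mul]; exact hFcn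
  refine ⟨Cext ∘L (K.orthogonalProjection : H →L[ℂ] K), ?_, ?_, ?_⟩
  · calc ‖Cext ∘L (K.orthogonalProjection : H →L[ℂ] K)‖
        ≤ ‖Cext‖ * ‖(K.orthogonalProjection : H →L[ℂ] K)‖ := opNorm_comp_le _ _
      _ ≤ 1 * 1 := by
          apply mul_le_mul hCextn (K.orthogonalProjection_norm_le) (norm_nonneg (K.orthogonalProjection : H →L[ℂ] K)) zero_le_one
      _ = 1 := one_mul 1
  · intro x
    have hmem : Q0 x ∈ K := (LinearMap.range (Q0 : H →ₗ[ℂ] H)).le_topologicalClosure ⟨x, rfl⟩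
    have hu : (⟨Q0 x, hmem⟩ : K) = e ⟨Q0 x, ⟨x, rfl⟩⟩ := rfl
    have hproj : K.orthogonalProjection (Q0 x) = (⟨Q0 x, hmem⟩ : K) :=
      Submodule.orthogonalProjection_mem_subspace_eq_self (⟨Q0 x, hmem⟩ : K)
    rw [comp_apply, hproj, hu]
    have hext : Cext (e ⟨Q0 x, ⟨x, rfl⟩⟩) = Fc ⟨Q0 x, ⟨x, rfl⟩⟩ :=
      ContinuousLinearMap.extend_eq Fc h_dense hui _
    rw [hext]
    exact key _ _ (hwd ⟨Q0 x, ⟨x, rfl⟩⟩)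
  · intro x hx
    rw [comp_apply, Submodule.orthogonalProjectionOnto_apply_of_mem_orthogonal hx, map_zero]

set_option synthInstance.maxHeartbeats 1000000 in
set_option maxHeartbeats 1000000 in
/-- Let `R_0 ≥ 0` with positive square root `Q0 = R_0^{1/2}` and
`H_{R_0}` the closure of `ran Q0`.  Every `R` with `0 ≤ R ≤ R_0` factors uniquely as
`R = Q0 T Q0` with `T` a positive contraction supported on `H_{R_0}`
(i.e. `T` vanishes on `H_{R_0}ᗮ` and has range in `H_{R_0}`). -/
theorem intrinsic_factorization_unique
    {H : Type*} [NormedAddCommGroup H] [InnerProductSpace ℂ H] [CompleteSpace H]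
    (R0 Q0 R : H →L[ℂ] H)
    (hR0 : R0.IsPositive) (hQ0 : Q0.IsPositive) (hQ0sq : Q0 * Q0 = R0)
    (hR : R.IsPositive) (hRle : (R0 - R).IsPositive) :
    ∃! T : H →L[ℂ] H, T.IsPositive ∧ ‖T‖ ≤ 1 ∧
      (∀ x ∈ ((LinearMap.range (Q0 : H →ₗ[ℂ] H)).topologicalClosure)ᗮ, T x = 0) ∧
      LinearMap.range (T : H →ₗ[ℂ] H) ≤ (LinearMap.range (Q0 : H →ₗ[ℂ] H)).topologicalClosure ∧
      R = Q0 * T * Q0 := by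
  classical
  set K := (LinearMap.range (Q0 : H →ₗ[ℂ] H)).topologicalClosure with hKdef
  haveI : CompleteSpace K := (LinearMap.range (Q0 : H →ₗ[ℂ] H)).isClosed_topologicalClosure.completeSpace_coe
  have hq0adj : ContinuousLinearMap.adjoint Q0 = Q0 := hQ0.isSelfAdjoint.adjoint_eq
  have hRnn : (0 : H →L[ℂ] H) ≤ R := (nonneg_iff_isPositive R).mpr hR
  set S := CFC.sqrt R with hSdef
  have hSnn : (0 : H →L[ℂ] H) ≤ S := CFC.sqrt_nonneg R
  have hSpos : S.IsPositive := (nonneg_iff_isPositive S).mp hSnn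
  have hSadj : ContinuousLinearMap.adjoint S = S := hSpos.isSelfAdjoint.adjoint_eq
  have hSS : S * S = R := CFC.sqrt_mul_sqrt_self R hRnn
  -- the key norm inequality
  have hb : ∀ x, ‖S x‖ ≤ ‖Q0 x‖ := by
    intro x
    have hs1 : ⟪S (S x), x⟫ = ⟪S x, S x⟫ := by
      conv_lhs => rw [← hSadj]
      rw [adjoint_inner_left, hSadj]
    have h1 : ‖S x‖ ^ 2 = RCLike.re ⟪R x, x⟫ := by
      rw [← hSS, mul_apply_eq_comp, hs1, inner_self_eq_norm_sq (𝕜 := ℂ)]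
    have hq1 : ⟪Q0 (Q0 x), x⟫ = ⟪Q0 x, Q0 x⟫ := by
      conv_lhs => rw [← hq0adj]
      rw [adjoint_inner_left, hq0adj]
    have h3 : RCLike.re ⟪R0 x, x⟫ = ‖Q0 x‖ ^ 2 := by
      rw [← hQ0sq, mul_apply_eq_comp, hq1, inner_self_eq_norm_sq (𝕜 := ℂ)]
    have h2 : RCLike.re ⟪R x, x⟫ ≤ RCLike.re ⟪R0 x, x⟫ := by
      have h4 := hRle.re_inner_nonneg_left x
      rw [sub_apply, inner_sub_left, map_sub] at h4
      linarith
    nlinarith [norm_nonneg (S x), norm_nonneg (Q0 x)]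
  obtain ⟨C, hCn, hCQ, hC0⟩ := aux_exists_contraction Q0 S hb
  set T := ContinuousLinearMap.adjoint C ∘L C with hTdef
  -- basic facts about T
  have hTQ : ∀ x y, ⟪T (Q0 x), Q0 y⟫ = ⟪R x, y⟫ := by
    intro x y
    rw [hTdef, comp_apply, adjoint_inner_left, hCQ, hCQ, ← hSadj, adjoint_inner_left, hSadj,
      ← mul_apply_eq_comp, hSS]
    have hradj : ContinuousLinearMap.adjoint R = R := hR.isSelfAdjoint.adjoint_eq
    rw [← adjoint_inner_left, hradj]
  have hT0 : ∀ x ∈ Kᗮ, T x = 0 := by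
    intro x hx
    rw [hTdef, comp_apply, hC0 x hx, map_zero]
  have horth : Kᗮ = (LinearMap.range (Q0 : H →ₗ[ℂ] H))ᗮ := by
    rw [hKdef, ← Submodule.orthogonal_orthogonal_eq_closure]
    refine le_antisymm ?_ ?_
    · exact Submodule.orthogonal_le (LinearMap.range (Q0 : H →ₗ[ℂ] H)).le_orthogonal_orthogonal
    · exact (LinearMap.range (Q0 : H →ₗ[ℂ] H))ᗮ.le_orthogonal_orthogonal
  have hTr : LinearMap.range (T : H →ₗ[ℂ] H) ≤ K := by
    rintro _ ⟨x, rfl⟩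
    have hmem : T x ∈ Kᗮᗮ := by
      rw [Submodule.mem_orthogonal]
      intro u hu
      rw [hTdef, comp_apply, inner_eq_zero_symm, adjoint_inner_left, hC0 u hu,
        inner_zero_right]
    rwa [Submodule.orthogonal_orthogonal] at hmem
  have hfact : R = Q0 * T * Q0 := by
    ext x
    refine ext_inner_right ℂ fun y => ?_
    have hr : (Q0 * T * Q0) x = Q0 (T (Q0 x)) := rfl
    rw [hr, ← hq0adj, adjoint_inner_left, hq0adj, hTQ]
  refine ⟨T, ⟨?_, ?_, fun x hx => hT0 x hx, hTr, hfact⟩, ?_⟩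
  · have := isPositive_adjoint_comp_self C
    simpa using this
  · rw [hTdef, norm_adjoint_comp_self]
    nlinarith [norm_nonneg C]
  · rintro T' ⟨hT'pos, hT'n, hT'0, hT'r, hT'f⟩
    -- T' agrees with T on the range of Q0
    have hDQ : ∀ x, T' (Q0 x) = T (Q0 x) := by
      intro x
      have hmem : T' (Q0 x) - T (Q0 x) ∈ K :=
        sub_mem (hT'r ⟨Q0 x, rfl⟩) (hTr ⟨Q0 x, rfl⟩)
      have hT'Q : ∀ y, ⟪T' (Q0 x), Q0 y⟫ = ⟪R x, y⟫ := by
        intro y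
        have : ⟪(Q0 * T' * Q0) x, y⟫ = ⟪R x, y⟫ := by rw [← hT'f]
        rw [← this]
        have hr : (Q0 * T' * Q0) x = Q0 (T' (Q0 x)) := rfl
        rw [hr, ← hq0adj, adjoint_inner_left, hq0adj]
      have hmem2 : T' (Q0 x) - T (Q0 x) ∈ Kᗮ := by
        rw [horth, Submodule.mem_orthogonal]
        rintro _ ⟨y, rfl⟩
        rw [inner_eq_zero_symm, inner_sub_left]
        exact (by rw [hT'Q y, hTQ x y, sub_self] : ⟪T' (Q0 x), Q0 y⟫ - ⟪T (Q0 x), Q0 y⟫ = 0)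
      have hz : ⟪T' (Q0 x) - T (Q0 x), T' (Q0 x) - T (Q0 x)⟫ = 0 :=
        (Submodule.mem_orthogonal K _).mp hmem2 _ hmem
      exact sub_eq_zero.mp (inner_self_eq_zero.mp hz)
    -- hence they agree on K by density and continuity
    have hDK : ∀ z ∈ K, T' z = T z := by
      intro z hz
      have hsub : (K : Set H) ⊆ {z : H | T' z = T z} := by
        rw [hKdef, Submodule.topologicalClosure_coe]
        refine closure_minimal ?_ (isClosed_eq T'.continuous T.continuous)
        rintro _ ⟨x, rfl⟩
        exact hDQ x
      exact hsub hz
    ext z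
    obtain ⟨a, ha, b, hb', rfl⟩ := K.exists_add_mem_mem_orthogonal z
    rw [map_add, map_add, hDK a ha, hT'0 b hb', hT0 b hb']
end

section
/- With M = closure of {u ∈ H_{R_0} : R_0^{1/2} u ∈ K} and P_M the orthogonal projection of H_{R_0} onto M, the operator S' := R_0^{1/2} P_M R_0^{1/2} satisfies 0 ≤ S' ≤ R_0, ran(S') ⊆ K, and dominates every positive R ≤ R_0 with ran(R) ⊆ K; hence S' equals the shorted operator R_0|_K. -/
open ContinuousLinearMap RCLike

local notation "⟪" x ", " y "⟫" => @inner ℂ _ _ x y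

/-- With `Q0 = R_0^{1/2}`, `H_{R_0}` the closure of `ran Q0`,
`M` the closure of `{u ∈ H_{R_0} : Q0 u ∈ K}`, and `P_M` the orthogonal projection onto `M`,
the operator `S' = Q0 P_M Q0` satisfies `0 ≤ S' ≤ R_0`, `ran S' ⊆ K`, and dominates every
positive `R ≤ R_0` with `ran R ⊆ K`; hence `S'` is the shorted operator `R_0|_K`. -/
theorem shorted_operator_intrinsic_form
    {H : Type*} [NormedAddCommGroup H] [InnerProductSpace ℂ H] [CompleteSpace H]
    (R0 Q0 : H →L[ℂ] H)
    (hR0 : R0.IsPositive) (hQ0 : Q0.IsPositive) (hQ0sq : Q0 * Q0 = R0)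
    (K : Submodule ℂ H) (hK : IsClosed (K : Set H))
    (M : Submodule ℂ H)
    (hM : M = ((LinearMap.range (Q0 : H →ₗ[ℂ] H)).topologicalClosure ⊓
      Submodule.comap (Q0 : H →ₗ[ℂ] H) K).topologicalClosure)
    (PM : H →L[ℂ] H)
    (hPMsa : IsSelfAdjoint PM) (hPMidem : IsIdempotentElem PM)
    (hPMrange : LinearMap.range (PM : H →ₗ[ℂ] H) = M) :
    (Q0 * PM * Q0).IsPositive ∧
    (R0 - Q0 * PM * Q0).IsPositive ∧
    LinearMap.range ((Q0 * PM * Q0 : H →L[ℂ] H) : H →ₗ[ℂ] H) ≤ K ∧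
    (∀ R : H →L[ℂ] H, R.IsPositive → (R0 - R).IsPositive →
      LinearMap.range (R : H →ₗ[ℂ] H) ≤ K → (Q0 * PM * Q0 - R).IsPositive) := by
  have hQ0sa : IsSelfAdjoint Q0 := hQ0.isSelfAdjoint
  have hQin : ∀ a b : H, ⟪Q0 a, b⟫ = ⟪a, Q0 b⟫ := fun a b => hQ0sa.isSymmetric a b
  have hPin : ∀ a b : H, ⟪PM a, b⟫ = ⟪a, PM b⟫ := fun a b => hPMsa.isSymmetric a b
  have hPP : ∀ v : H, PM (PM v) = PM v := fun v => by
    rw [← ContinuousLinearMap.mul_apply, hPMidem]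
  -- S' is self-adjoint
  have hSsa : IsSelfAdjoint (Q0 * PM * Q0) := by
    have : star (Q0 * PM * Q0) = Q0 * PM * Q0 := by
      simp only [star_mul, hQ0sa.star_eq, hPMsa.star_eq, mul_assoc]
    exact this
  -- key inner product identity
  have hPvv : ∀ v : H, ⟪PM v, v⟫ = (‖PM v‖ : ℂ) ^ 2 := by
    intro v
    calc ⟪PM v, v⟫ = ⟪PM (PM v), v⟫ := by rw [hPP]
      _ = ⟪PM v, PM v⟫ := hPin _ _
      _ = (‖PM v‖ : ℂ) ^ 2 := by
            rw [inner_self_eq_norm_sq_to_K (𝕜 := ℂ)]; norm_cast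
  have key : ∀ x : H, ⟪(Q0 * PM * Q0) x, x⟫ = (‖PM (Q0 x)‖ : ℂ) ^ 2 := by
    intro x
    have h1 : ((Q0 * PM * Q0) x : H) = Q0 (PM (Q0 x)) := rfl
    calc ⟪(Q0 * PM * Q0) x, x⟫ = ⟪PM (Q0 x), Q0 x⟫ := by rw [h1, hQin] 
      _ = (‖PM (Q0 x)‖ : ℂ) ^ 2 := hPvv _
  have keyRe : ∀ x : H, re ⟪(Q0 * PM * Q0) x, x⟫ = ‖PM (Q0 x)‖ ^ 2 := by
    intro x; rw [key x]; norm_cast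
  -- norm of projection
  have hPMnorm : ∀ v : H, ‖PM v‖ ≤ ‖v‖ := by
    intro v
    rcases le_or_gt ‖PM v‖ 0 with h | h
    · exact h.trans (norm_nonneg v)
    · have h2 : ‖PM v‖ ^ 2 = ‖⟪PM v, v⟫‖ := by
        rw [hPvv v]; norm_num
      have hcs := norm_inner_le_norm (𝕜 := ℂ) (PM v) v
      nlinarith [norm_nonneg (PM v)]
  -- images of members of M lie in K
  have hQM : ∀ u ∈ M, Q0 u ∈ K := by
    intro u hu
    rw [hM] at hu
    have hu' : (u : H) ∈ closure (((LinearMap.range (Q0 : H →ₗ[ℂ] H)).topologicalClosure ⊓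
        Submodule.comap (Q0 : H →ₗ[ℂ] H) K : Submodule ℂ H) : Set H) := hu
    have : Q0 u ∈ closure (K : Set H) := by
      refine map_mem_closure Q0.continuous hu' ?_
      rintro v ⟨-, hv2⟩
      exact hv2
    rwa [hK.closure_eq] at this
  refine ⟨isPositive_def'.2 ⟨hSsa, fun x => by rw [reApplyInnerSelf, keyRe]; positivity⟩, ?_, ?_, ?_⟩
  · -- R0 - S' positive
    refine isPositive_def'.2 ⟨hR0.isSelfAdjoint.sub hSsa, fun x => ?_⟩
    have hR0x : re ⟪R0 x, x⟫ = ‖Q0 x‖ ^ 2 := by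
      rw [← hQ0sq]
      have h1 : ((Q0 * Q0) x : H) = Q0 (Q0 x) := rfl
      rw [h1, hQin, ← inner_self_eq_norm_sq (𝕜 := ℂ)]
    have : re ⟪(R0 - Q0 * PM * Q0) x, x⟫ = ‖Q0 x‖ ^ 2 - ‖PM (Q0 x)‖ ^ 2 := by
      rw [ContinuousLinearMap.sub_apply, inner_sub_left, map_sub, hR0x, keyRe]
    rw [reApplyInnerSelf, this]
    have := hPMnorm (Q0 x)
    nlinarith [norm_nonneg (PM (Q0 x))]
  · -- range in K
    rintro _ ⟨x, rfl⟩
    have h1 : ((Q0 * PM * Q0) x : H) = Q0 (PM (Q0 x)) := rfl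
    rw [ContinuousLinearMap.coe_coe, h1]
    exact hQM _ (hPMrange ▸ LinearMap.mem_range_self (PM : H →ₗ[ℂ] H) (Q0 x))
  · -- maximality
    intro R hR hR0R hRK
    have hRin : ∀ a b : H, ⟪R a, b⟫ = ⟪a, R b⟫ := fun a b => hR.isSelfAdjoint.isSymmetric a b
    have hR0z : ∀ z : H, re ⟪R0 z, z⟫ = ‖Q0 z‖ ^ 2 := by
      intro z
      rw [← hQ0sq]
      have h1 : ((Q0 * Q0) z : H) = Q0 (Q0 z) := rfl
      rw [h1, hQin, ← inner_self_eq_norm_sq (𝕜 := ℂ)]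
    refine isPositive_def'.2 ⟨hSsa.sub hR.isSelfAdjoint, fun x => ?_⟩
    set m : H := PM (Q0 x) with hm
    set w : H := Q0 x - m with hw
    -- w is orthogonal to M
    have hwM : ∀ m' ∈ M, ⟪m', w⟫ = 0 := by
      intro m' hm'
      rw [← hPMrange] at hm'
      obtain ⟨u, rfl⟩ := hm'
      rw [ContinuousLinearMap.coe_coe, hPin, hw, hm, map_sub, hPP, sub_self, inner_zero_right]
    -- membership in the closure of range Q0
    have hH1closed : IsClosed ((LinearMap.range (Q0 : H →ₗ[ℂ] H)).topologicalClosure : Set H) :=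
      Submodule.isClosed_topologicalClosure _
    haveI : CompleteSpace ((LinearMap.range (Q0 : H →ₗ[ℂ] H)).topologicalClosure) :=
      hH1closed.completeSpace_coe
    have hmH1 : m ∈ (LinearMap.range (Q0 : H →ₗ[ℂ] H)).topologicalClosure := by
      have : M ≤ (LinearMap.range (Q0 : H →ₗ[ℂ] H)).topologicalClosure := by
        rw [hM]
        exact Submodule.topologicalClosure_minimal _ inf_le_left hH1closed
      exact this (hPMrange ▸ LinearMap.mem_range_self (PM : H →ₗ[ℂ] H) (Q0 x))
    have hwH1 : w ∈ (LinearMap.range (Q0 : H →ₗ[ℂ] H)).topologicalClosure := by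
      refine Submodule.sub_mem _ ?_ hmH1
      exact Submodule.le_topologicalClosure _ (LinearMap.mem_range_self (Q0 : H →ₗ[ℂ] H) x)
    -- w is in the closure of Q0 '' Kᗮ
    haveI : CompleteSpace K := hK.completeSpace_coe
    have horth : (Submodule.map (Q0 : H →ₗ[ℂ] H) Kᗮ)ᗮ = Submodule.comap (Q0 : H →ₗ[ℂ] H) K := by
      ext v
      rw [Submodule.mem_orthogonal, Submodule.mem_comap]
      constructor
      · intro h
        have : Q0 v ∈ Kᗮᗮ := by
          rw [Submodule.mem_orthogonal]
          intro y hy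
          have := h (Q0 y) (Submodule.mem_map_of_mem hy)
          rwa [hQin] at this
        rwa [Submodule.orthogonal_orthogonal] at this
      · rintro h u ⟨y, hy, rfl⟩
        have : ((Q0 : H →ₗ[ℂ] H) y : H) = Q0 y := rfl
        rw [this, hQin]
        exact Submodule.inner_left_of_mem_orthogonal h hy
    have hwcl : w ∈ closure ((Submodule.map (Q0 : H →ₗ[ℂ] H) Kᗮ : Submodule ℂ H) : Set H) := by
      have : w ∈ (Submodule.map (Q0 : H →ₗ[ℂ] H) Kᗮ)ᗮᗮ := by
        rw [horth, Submodule.mem_orthogonal]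
        intro v hv
        rw [Submodule.mem_comap] at hv
        set v1 : H := (Submodule.orthogonalProjectionOnto (LinearMap.range (Q0 : H →ₗ[ℂ] H)).topologicalClosure v : H)
          with hv1def
        have hv1 : v1 ∈ (LinearMap.range (Q0 : H →ₗ[ℂ] H)).topologicalClosure := Submodule.coe_mem _
        have hv0 : v - v1 ∈ ((LinearMap.range (Q0 : H →ₗ[ℂ] H)).topologicalClosure)ᗮ :=
          Submodule.sub_starProjection_mem_orthogonal (K := (LinearMap.range (Q0 : H →ₗ[ℂ] H)).topologicalClosure) v
        -- Q0 kills v - v1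
        have hQv0 : Q0 (v - v1) = 0 := by
          have h0 : ⟪Q0 (v - v1), Q0 (v - v1)⟫ = 0 := by
            rw [hQin]
            exact Submodule.inner_left_of_mem_orthogonal
              (Submodule.le_topologicalClosure _ (LinearMap.mem_range_self (Q0 : H →ₗ[ℂ] H) _)) hv0
          exact inner_self_eq_zero.1 h0
        have hQv1 : Q0 v1 ∈ K := by
          have : Q0 v1 = Q0 v := by
            have h := map_sub Q0 v v1
            rw [hQv0] at h
            exact (sub_eq_zero.mp h.symm).symm
          rw [this]; exact hv
        have hv1M : v1 ∈ M := by
          rw [hM]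
          exact Submodule.le_topologicalClosure _ ⟨hv1, hQv1⟩
        have e1 : ⟪v1, w⟫ = 0 := hwM v1 hv1M
        have e0 : ⟪v - v1, w⟫ = 0 :=
          Submodule.inner_left_of_mem_orthogonal hwH1 hv0
        have : ⟪v, w⟫ = ⟪v1, w⟫ + ⟪v - v1, w⟫ := by
          rw [← inner_add_left]
          congr 1
          abel
        rw [this, e1, e0, add_zero]
      rw [Submodule.orthogonal_orthogonal_eq_closure] at this
      exact this
    -- the epsilon estimate
    have hest : ∀ ε : ℝ, 0 < ε → re ⟪R x, x⟫ ≤ (‖m‖ + ε) ^ 2 := by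
      intro ε hε
      obtain ⟨b, hb, hbd⟩ := Metric.mem_closure_iff.1 hwcl ε hε
      obtain ⟨y, hy, rfl⟩ := hb
      have hQyy : ((Q0 : H →ₗ[ℂ] H) y : H) = Q0 y := rfl
      -- re ⟪R x, x⟫ = re ⟪R (x - y), x - y⟫
      have hR1 : ⟪R x, y⟫ = 0 :=
        Submodule.inner_right_of_mem_orthogonal (hRK (LinearMap.mem_range_self (R : H →ₗ[ℂ] H) x)) hy
      have hR2 : ⟪R y, x⟫ = 0 := by
        rw [hRin]
        exact Submodule.inner_left_of_mem_orthogonal (hRK (LinearMap.mem_range_self (R : H →ₗ[ℂ] H) x)) hy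
      have hR3 : ⟪R y, y⟫ = 0 :=
        Submodule.inner_right_of_mem_orthogonal (hRK (LinearMap.mem_range_self (R : H →ₗ[ℂ] H) y)) hy
      have hRexp : ⟪R (x - y), x - y⟫ = ⟪R x, x⟫ := by
        rw [map_sub, inner_sub_left, inner_sub_right, inner_sub_right, hR1, hR2, hR3]
        ring
      -- compare with R0
      have hle : re ⟪R (x - y), x - y⟫ ≤ re ⟪R0 (x - y), x - y⟫ := by
        have := (isPositive_def'.1 hR0R).2 (x - y)
        rw [reApplyInnerSelf, ContinuousLinearMap.sub_apply, inner_sub_left, map_sub] at this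
        linarith
      have hnorm : ‖Q0 (x - y)‖ ≤ ‖m‖ + ε := by
        have : Q0 (x - y) = m + (w - Q0 y) := by
          rw [map_sub, hw]
          abel
        rw [this]
        calc ‖m + (w - Q0 y)‖ ≤ ‖m‖ + ‖w - Q0 y‖ := norm_add_le _ _
          _ ≤ ‖m‖ + ε := by
              have : ‖w - Q0 y‖ = dist w (Q0 y) := (dist_eq_norm _ _).symm
              rw [this]
              exact add_le_add_right hbd.le _
      calc re ⟪R x, x⟫ = re ⟪R (x - y), x - y⟫ := by rw [hRexp]
        _ ≤ re ⟪R0 (x - y), x - y⟫ := hle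
        _ = ‖Q0 (x - y)‖ ^ 2 := hR0z _
        _ ≤ (‖m‖ + ε) ^ 2 := by
            have h0 : (0:ℝ) ≤ ‖Q0 (x - y)‖ := norm_nonneg _
            nlinarith
    -- conclude re ⟪R x, x⟫ ≤ ‖m‖ ^ 2
    have hfinal : re ⟪R x, x⟫ ≤ ‖m‖ ^ 2 := by
      have hs : Real.sqrt (re ⟪R x, x⟫) ≤ ‖m‖ := by
        refine le_of_forall_pos_le_add fun ε hε => ?_
        calc Real.sqrt (re ⟪R x, x⟫) ≤ Real.sqrt ((‖m‖ + ε) ^ 2) :=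
              Real.sqrt_le_sqrt (hest ε hε)
          _ = ‖m‖ + ε := Real.sqrt_sq (by positivity)
      have h0 : 0 ≤ re ⟪R x, x⟫ := hR.2 x
      calc re ⟪R x, x⟫ = Real.sqrt (re ⟪R x, x⟫) ^ 2 := (Real.sq_sqrt h0).symm
        _ ≤ ‖m‖ ^ 2 := by
            have := Real.sqrt_nonneg (re ⟪R x, x⟫)
            nlinarith
    have : re ⟪(Q0 * PM * Q0 - R) x, x⟫ = ‖m‖ ^ 2 - re ⟪R x, x⟫ := by
      rw [ContinuousLinearMap.sub_apply, inner_sub_left, map_sub, keyRe]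
    rw [reApplyInnerSelf, this]
    linarith
end
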